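/- Let 0<α<1 be an irrational number which is poorly approximated by rational numbers: there exist ε>0 and c>0 such that |α − p/q| ≥ c·q^{−2−ε} for all positive integers p,q. Then for every t>0 the series Σ_{n=0}^∞ Γ(1−(n+1)α)·t^{−nα} converges absolutely. -/

import Mathlib

open Real

lemma sin_pi_round_bound (x : ℝ) : 2 * |x - round x| ≤ |Real.sin (π * x)| := by
  have h1 : |x - round x| ≤ 1/2 := abs_sub_round x
  have key : Real.sin (π * x) = (-1 : ℝ)^(round x) * Real.sin (π * (x - round x)) := by
    have h := Real.sin_add_int_mul_pi (π * (x - (round x : ℤ))) (round x)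
    rw [← h]; ring_nf
  have hone : |(-1 : ℝ)^(round x)| = 1 := by
    rcases Int.even_or_odd (round x) with h | h
    · rw [h.neg_one_zpow]; simp
    · rw [Odd.neg_one_zpow h]; simp
  have habs : |Real.sin (π * x)| = |Real.sin (π * (x - round x))| := by
    rw [key, abs_mul, hone, one_mul]
  rw [habs]
  set d : ℝ := x - round x with hd
  have h2 : |Real.sin (π * d)| = Real.sin (π * |d|) := by
    rcases le_or_gt 0 d with h | h
    · rw [abs_of_nonneg h, abs_of_nonneg]
      apply Real.sin_nonneg_of_nonneg_of_le_pi (by positivity)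
      nlinarith [Real.pi_pos, abs_of_nonneg h ▸ h1]
    · rw [abs_of_neg h]
      have hneg : Real.sin (π * -d) = - Real.sin (π * d) := by rw [mul_neg, Real.sin_neg]
      rw [hneg, abs_of_nonpos]
      have hpos : 0 ≤ Real.sin (π * -d) := by
        apply Real.sin_nonneg_of_nonneg_of_le_pi (by nlinarith [Real.pi_pos])
        nlinarith [Real.pi_pos, abs_of_neg h ▸ h1]
      linarith [hneg ▸ hpos]
  rw [h2]
  have h3 : 2/π * (π * |d|) ≤ Real.sin (π * |d|) := by
    apply Real.mul_le_sin (by positivity)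
    nlinarith [Real.pi_pos]
  have hπ : π ≠ 0 := Real.pi_ne_zero
  calc 2 * |d| = 2/π * (π * |d|) := by field_simp
    _ ≤ _ := h3

-- single power of exp bound: R^k / k! ≤ exp R
lemma pow_div_factorial_le_exp {R : ℝ} (hR : 0 ≤ R) (k : ℕ) :
    R ^ k / (k.factorial : ℝ) ≤ Real.exp R := by
  calc R ^ k / (k.factorial : ℝ)
      ≤ ∑ i ∈ Finset.range (k+1), R ^ i / (i.factorial : ℝ) := by
        apply Finset.single_le_sum (f := fun i => R ^ i / (i.factorial : ℝ))
          (fun i _ => by positivity) (Finset.self_mem_range_succ k)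
    _ ≤ Real.exp R := Real.sum_le_exp_of_nonneg hR _

-- (n+1)^(1+ε) ≤ (exp (1+ε))^(n+1)
lemma rpow_le_exp_pow {ε : ℝ} (hε : 0 < ε) (n : ℕ) :
    ((n : ℝ) + 1) ^ (1 + ε) ≤ (Real.exp (1 + ε)) ^ (n + 1) := by
  have h1 : ((n : ℝ) + 1) ≤ Real.exp ((n : ℝ) + 1) := by
    have := Real.add_one_le_exp ((n : ℝ) + 1); linarith [Real.exp_pos ((n:ℝ)+1)]
  calc ((n : ℝ) + 1) ^ (1 + ε) ≤ (Real.exp ((n : ℝ) + 1)) ^ (1 + ε) :=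
        Real.rpow_le_rpow (by positivity) h1 (by linarith)
    _ = Real.exp (((n : ℝ) + 1) * (1 + ε)) := by
        rw [← Real.exp_mul]
    _ = (Real.exp (1 + ε)) ^ ((n : ℝ) + 1) := by
        rw [← Real.exp_mul, mul_comm]
    _ = (Real.exp (1 + ε)) ^ (n + 1 : ℕ) := by
        rw [← Real.rpow_natCast (Real.exp (1+ε)) (n+1)]; norm_num

set_option maxHeartbeats 1000000 in
private lemma key_bound
    (α : ℝ) (hα : 0 < α)
    (ε c : ℝ) (hε : 0 < ε) (hc : 0 < c)
    (hdio : ∀ p q : ℕ, 0 < p → 0 < q →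
      |α - (p : ℝ) / q| ≥ c * (q : ℝ) ^ (-(2 + ε)))
    (t : ℝ) (ht : 0 < t) (n : ℕ) (hx2 : 2 ≤ ((n : ℝ) + 1) * α) :
    |Real.Gamma (1 - (n + 1) * α) * t ^ (-(n * α))| ≤
      ((π / (2 * c)) * Real.exp (1 + ε)
        * ((2 * max 1 (t ^ (-α)) * Real.exp (1 + ε)) ^ (1/α)) ^ 2
        * Real.exp ((2 * max 1 (t ^ (-α)) * Real.exp (1 + ε)) ^ (1/α))) * (1/2) ^ n := by
  set T : ℝ := max 1 (t ^ (-α)) with hT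
  set E : ℝ := Real.exp (1 + ε) with hE
  set M : ℝ := 2 * T * E with hM
  set R : ℝ := M ^ (1/α) with hR
  set x : ℝ := ((n : ℝ) + 1) * α with hx
  have hx0 : 0 < x := lt_of_lt_of_le two_pos hx2
  have hT1 : 1 ≤ T := le_max_left _ _
  have hE1 : 1 ≤ E := Real.one_le_exp (by linarith)
  have hM1 : 1 ≤ M := by nlinarith
  have hM0 : 0 < M := by linarith
  have hR1 : 1 ≤ R := by
    have := Real.rpow_le_rpow_of_exponent_le hM1 (le_of_lt (show (0:ℝ) < 1/α by positivity))
    rwa [Real.rpow_zero] at this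
  -- round / diophantine
  have hrd : |x - round x| ≤ 1/2 := abs_sub_round x
  have hr1 : (1 : ℤ) < round x := by
    have h1 : (1:ℝ) < (round x : ℤ) := by
      rcases abs_le.mp hrd with ⟨h, _⟩; linarith
    exact_mod_cast h1
  set p : ℕ := (round x).toNat with hpdef
  have hp : 0 < p := by
    have := Int.toNat_of_nonneg (by linarith : (0:ℤ) ≤ round x); omega
  have hpr : ((p : ℕ) : ℝ) = ((round x : ℤ) : ℝ) := by
    have := Int.toNat_of_nonneg (by linarith : (0:ℤ) ≤ round x)
    exact_mod_cast congrArg (fun z : ℤ => (z : ℝ)) this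
  have hd := hdio p (n+1) hp n.succ_pos
  have hn1 : (0:ℝ) < (n : ℝ) + 1 := by positivity
  have hxp : |x - (p : ℝ)| = ((n : ℝ) + 1) * |α - (p : ℝ) / ((n:ℝ) + 1)| := by
    have heq : x - (p : ℝ) = ((n:ℝ)+1) * (α - (p : ℝ) / ((n:ℝ) + 1)) := by
      field_simp [hx]
      ring
    rw [heq, abs_mul, abs_of_pos hn1]
  have hrpow : ((n:ℝ)+1) * ((n:ℝ)+1) ^ (-(2+ε)) = ((n:ℝ)+1) ^ (-(1+ε)) := by
    rw [show (-(1+ε) : ℝ) = 1 + -(2+ε) by ring, Real.rpow_add hn1, Real.rpow_one]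
  have hlow : c * ((n:ℝ)+1) ^ (-(1+ε)) ≤ |x - ((round x : ℤ) : ℝ)| := by
    rw [← hpr, hxp]
    have hcast : ((n+1 : ℕ) : ℝ) = (n:ℝ) + 1 := by push_cast; ring
    rw [hcast] at hd
    calc c * ((n:ℝ)+1) ^ (-(1+ε)) = ((n:ℝ)+1) * (c * ((n:ℝ)+1) ^ (-(2+ε))) := by
          rw [← hrpow]; ring
      _ ≤ ((n:ℝ)+1) * |α - (p : ℝ) / ((n:ℝ) + 1)| := by
          apply mul_le_mul_of_nonneg_left hd (le_of_lt hn1)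
  have hsin : 2 * (c * ((n:ℝ)+1) ^ (-(1+ε))) ≤ |Real.sin (π * x)| := by
    have := sin_pi_round_bound x
    nlinarith
  have hsinpos : 0 < |Real.sin (π * x)| := lt_of_lt_of_le (by positivity) hsin
  have hΓx : 0 < Real.Gamma x := Real.Gamma_pos_of_pos hx0
  -- reflection formula
  have hrefl := Real.Gamma_mul_Gamma_one_sub x
  have hsinne : Real.sin (π * x) ≠ 0 := by
    intro h; rw [h] at hsinpos; simp at hsinpos
  have hG1 : |Real.Gamma (1 - x)| = π / (|Real.sin (π * x)| * Real.Gamma x) := by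
    have hΓ1 : Real.Gamma (1 - x) = π / Real.sin (π * x) / Real.Gamma x := by
      field_simp at hrefl ⊢
      linarith [hrefl]
    rw [hΓ1, abs_div, abs_div, abs_of_pos Real.pi_pos, abs_of_pos hΓx, div_div]
  -- floor and factorial lower bound for Gamma
  set q : ℕ := ⌊x⌋₊ with hq
  have hq2 : 2 ≤ q := Nat.le_floor (by exact_mod_cast hx2)
  have hqx : (q : ℝ) ≤ x := Nat.floor_le hx0.le
  have hxq : x < (q : ℝ) + 1 := Nat.lt_floor_add_one x
  have hq2' : (2:ℝ) ≤ (q:ℝ) := by exact_mod_cast hq2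
  have hΓq : ((q-1).factorial : ℝ) ≤ Real.Gamma x := by
    have h1 : Real.Gamma ((q : ℝ)) ≤ Real.Gamma x :=
      Real.Gamma_strictMonoOn_Ici.monotoneOn (Set.mem_Ici.mpr hq2')
        (Set.mem_Ici.mpr hx2) hqx
    have h2 : Real.Gamma ((q : ℝ)) = ((q-1).factorial : ℝ) := by
      have hq1 : ((q : ℝ)) = ((q - 1 : ℕ) : ℝ) + 1 := by
        have : q - 1 + 1 = q := by omega
        rw [← this]; push_cast; ring
      rw [hq1, Real.Gamma_nat_eq_factorial]
    linarith
  have hfq : (0:ℝ) < ((q-1).factorial : ℝ) := by positivity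
  -- t power bound
  have htpe : t ^ (-((n:ℝ) * α)) = (t ^ (-α)) ^ n := by
    rw [← Real.rpow_natCast (t ^ (-α)) n, ← Real.rpow_mul ht.le]
    ring_nf
  have htp : t ^ (-((n:ℝ) * α)) ≤ T ^ n := by
    rw [htpe]
    exact pow_le_pow_left₀ (Real.rpow_nonneg ht.le _) (le_max_right _ _) n
  have htpos : 0 < t ^ (-((n:ℝ) * α)) := Real.rpow_pos_of_pos ht _
  -- exponent bounds
  have hS : ((n : ℝ) + 1) ^ (1 + ε) ≤ E ^ (n + 1) := rpow_le_exp_pow hε n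
  have hSpos : (0:ℝ) < ((n : ℝ) + 1) ^ (1 + ε) := Real.rpow_pos_of_pos hn1 _
  -- M^n ≤ R^(q+1)
  have hMn : M ^ n ≤ R ^ (q + 1) := by
    have h1 : (n : ℝ) ≤ ((q:ℝ) + 1) / α := by
      rw [le_div_iff₀ hα]
      have hna : (n:ℝ) * α ≤ x := by
        rw [hx]
        have : (n:ℝ) * α + 0 ≤ (n:ℝ) * α + α := by linarith
        linarith [this]
      linarith
    calc M ^ n = M ^ ((n : ℝ)) := (Real.rpow_natCast M n).symm
      _ ≤ M ^ (((q:ℝ) + 1) / α) := Real.rpow_le_rpow_of_exponent_le hM1 h1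
      _ = (M ^ (1/α)) ^ ((q:ℝ) + 1) := by
          rw [show ((q:ℝ)+1)/α = (1/α) * ((q:ℝ)+1) by ring, Real.rpow_mul hM0.le]
      _ = R ^ (q + 1) := by
          rw [← Real.rpow_natCast R (q+1)]; push_cast; ring_nf; simp [hR]
  have hR0 : (0:ℝ) ≤ R := by linarith
  have hMR : M ^ n / ((q-1).factorial : ℝ) ≤ R ^ 2 * Real.exp R := by
    calc M ^ n / ((q-1).factorial : ℝ) ≤ R ^ (q+1) / ((q-1).factorial : ℝ) := by
          gcongr
      _ = R ^ 2 * (R ^ (q-1) / ((q-1).factorial : ℝ)) := by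
          rw [show q + 1 = 2 + (q - 1) by omega, pow_add]; ring
      _ ≤ R ^ 2 * Real.exp R :=
          mul_le_mul_of_nonneg_left (pow_div_factorial_le_exp hR0 (q-1))
            (by positivity)
  -- the sin-based bound on |Γ(1-x)|
  have hGle : |Real.Gamma (1 - x)| ≤
      π * (((n : ℝ) + 1) ^ (1 + ε)) / (2 * c * Real.Gamma x) := by
    rw [hG1]
    rw [div_le_div_iff₀ (by positivity) (by positivity)]
    have h2 : 2 * (c * ((n:ℝ)+1) ^ (-(1+ε))) * (((n : ℝ) + 1) ^ (1 + ε)) = 2 * c := by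
      rw [show (-(1+ε) : ℝ) = -(1+ε) by ring]
      rw [Real.rpow_neg (le_of_lt hn1)]
      field_simp
    have hstep : 2 * (c * ((n:ℝ)+1) ^ (-(1+ε))) * Real.Gamma x ≤
        |Real.sin (π * x)| * Real.Gamma x :=
      mul_le_mul_of_nonneg_right hsin hΓx.le
    calc π * (2 * c * Real.Gamma x)
        = π * (((n : ℝ) + 1) ^ (1 + ε)) *
            (2 * (c * ((n:ℝ)+1) ^ (-(1+ε))) * Real.Gamma x) := by
          rw [show π * (((n : ℝ) + 1) ^ (1 + ε)) *
            (2 * (c * ((n:ℝ)+1) ^ (-(1+ε))) * Real.Gamma x)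
            = π * ((2 * (c * ((n:ℝ)+1) ^ (-(1+ε))) * (((n : ℝ) + 1) ^ (1 + ε)))
              * Real.Gamma x) by ring, h2]
      _ ≤ π * (((n : ℝ) + 1) ^ (1 + ε)) * (|Real.sin (π * x)| * Real.Gamma x) :=
          mul_le_mul_of_nonneg_left hstep (by positivity)
  have hET : E ^ (n+1) * T ^ n = E * M ^ n * (1/2 : ℝ) ^ n := by
    have hMT : M * (1/2 : ℝ) = T * E := by rw [hM]; ring
    calc E ^ (n+1) * T ^ n = E * (T * E) ^ n := by rw [pow_succ, mul_pow]; ring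
      _ = E * (M * (1/2 : ℝ)) ^ n := by rw [hMT]
      _ = E * M ^ n * (1/2 : ℝ) ^ n := by rw [mul_pow]; ring
  calc |Real.Gamma (1 - x) * t ^ (-((n:ℝ) * α))|
      = |Real.Gamma (1 - x)| * t ^ (-((n:ℝ) * α)) := by
        rw [abs_mul, abs_of_pos htpos]
    _ ≤ (π * (((n : ℝ) + 1) ^ (1 + ε)) / (2 * c * Real.Gamma x)) * T ^ n :=
        mul_le_mul hGle htp htpos.le (by positivity)
    _ ≤ (π * E ^ (n+1) / (2 * c * ((q-1).factorial : ℝ))) * T ^ n := by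
        gcongr
    _ = (π / (2 * c)) * (E ^ (n+1) * T ^ n) / ((q-1).factorial : ℝ) := by ring
    _ = (π / (2 * c)) * E * (1/2 : ℝ) ^ n * (M ^ n / ((q-1).factorial : ℝ)) := by
        rw [hET]; ring
    _ ≤ (π / (2 * c)) * E * (1/2 : ℝ) ^ n * (R ^ 2 * Real.exp R) :=
        mul_le_mul_of_nonneg_left hMR (by positivity)
    _ = ((π / (2 * c)) * E * R ^ 2 * Real.exp R) * (1/2 : ℝ) ^ n := by ring

/-- **Pointwise convergence of the formal solution at an irregular singularity.**
Let `0 < α < 1` be irrational and poorly approximated by rational numbers: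
`|α - p/q| ≥ c q^{-2-ε}` for all positive integers `p, q` (some `ε, c > 0`).
Then for every `t > 0` the series `Σₙ Γ(1-(n+1)α) t^{-nα}` converges absolutely. -/
theorem formal_solution_irregular_converges_pointwise
    (α : ℝ) (hα : 0 < α) (hα1 : α < 1) (hirr : Irrational α)
    (ε c : ℝ) (hε : 0 < ε) (hc : 0 < c)
    (hdio : ∀ p q : ℕ, 0 < p → 0 < q →
      |α - (p : ℝ) / q| ≥ c * (q : ℝ) ^ (-(2 + ε)))
    (t : ℝ) (ht : 0 < t) :
    Summable (fun n : ℕ => |Real.Gamma (1 - (n + 1) * α) * t ^ (-(n * α))|) := by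
  set D : ℝ := ((π / (2 * c)) * Real.exp (1 + ε)
      * ((2 * max 1 (t ^ (-α)) * Real.exp (1 + ε)) ^ (1/α)) ^ 2
      * Real.exp ((2 * max 1 (t ^ (-α)) * Real.exp (1 + ε)) ^ (1/α))) with hD
  set N : ℕ := ⌈2/α⌉₊ with hN
  have hNbound : ∀ n : ℕ, N ≤ n → 2 ≤ ((n : ℝ) + 1) * α := by
    intro n hn
    have h1 : (2/α : ℝ) ≤ N := Nat.le_ceil _
    have h2 : (N : ℝ) ≤ (n : ℝ) := by exact_mod_cast hn
    have h3 : 2/α ≤ (n : ℝ) := le_trans h1 h2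
    rw [div_le_iff₀ hα] at h3
    nlinarith
  rw [← summable_nat_add_iff N]
  refine Summable.of_nonneg_of_le (fun n => abs_nonneg _) (fun n => ?_)
    ((summable_geometric_of_lt_one (by norm_num) (by norm_num : (1/2 : ℝ) < 1)).mul_left
      (D * (1/2) ^ N))
  have hk := key_bound α hα ε c hε hc hdio t ht (n + N)
    (hNbound (n + N) (Nat.le_add_left N n))
  calc |Real.Gamma (1 - ((n + N : ℕ) + 1) * α) * t ^ (-((n + N : ℕ) * α))|
      ≤ D * (1/2 : ℝ) ^ (n + N) := hk
    _ = D * (1/2 : ℝ) ^ N * (1/2 : ℝ) ^ n := by rw [pow_add]; ring
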